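/- Let A be a finite-dimensional algebra over a field F with char(F) ≠ 2 and char(F) ≠ 3, and let T : A → A be a linear map satisfying T(x)³ − x³ ∈ [A,A] for every x ∈ A. If ker T ∩ rad(A) = {0}, then T is bijective and T(M) ⊆ M for every maximal two-sided ideal M of A; in particular T(rad(A)) ⊆ rad(A). -/

import Mathlib

set_option linter.unusedSectionVars false
set_option linter.unnecessarySimpa false
set_option maxHeartbeats 1000000


section Density

variable {Ω B V : Type*} [Field Ω] [IsAlgClosed Ω] [Ring B] [Algebra Ω B]
  [AddCommGroup V] [Module B V] [Module Ω V] [IsScalarTower Ω B V]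



lemma my_smulCommClass : SMulCommClass B Ω V := by
  constructor
  intro b ω v
  rw [← IsScalarTower.algebraMap_smul B ω v, smul_smul, ← Algebra.commutes ω b,
    mul_smul, IsScalarTower.algebraMap_smul]

/-- action of `b : B` on `V` as an `Ω`-linear endomorphism. -/
noncomputable def actEnd (b : B) : V →ₗ[Ω] V where
  toFun v := b • v
  map_add' := smul_add b
  map_smul' ω v := by
    haveI := my_smulCommClass (Ω := Ω) (B := B) (V := V)
    simp [smul_comm b ω v]

@[simp] lemma actEnd_apply (b : B) (v : V) : actEnd (Ω := Ω) b v = b • v := rfl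


variable [IsSimpleModule B V] [FiniteDimensional Ω V]


lemma exists_scalar (f : V →ₗ[B] V) : ∃ c : Ω, ∀ v : V, f v = c • v := by
  haveI := my_smulCommClass (Ω := Ω) (B := B) (V := V)
  haveI : Nontrivial V := IsSimpleModule.nontrivial B V
  let g : V →ₗ[Ω] V :=
    { toFun := f
      map_add' := f.map_add
      map_smul' := fun ω v => by
        simp only [RingHom.id_apply]
        rw [← IsScalarTower.algebraMap_smul B ω v, f.map_smul,
          IsScalarTower.algebraMap_smul] }
  obtain ⟨c, hc⟩ := Module.End.exists_eigenvalue g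
  obtain ⟨v₀, hv₀⟩ := hc.exists_hasEigenvector
  refine ⟨c, ?_⟩
  let h : V →ₗ[B] V :=
    { toFun := fun v => f v - c • v
      map_add' := fun u w => by simp [smul_add]; abel
      map_smul' := fun b v => by
        simp only [RingHom.id_apply, f.map_smul, smul_sub]
        rw [smul_comm c b v] }
  have hh : h = 0 := by
    rcases h.injective_or_eq_zero with hinj | h0
    · exfalso
      have : h v₀ = 0 := by
        simp only [h, LinearMap.coe_mk, AddHom.coe_mk]
        have := hv₀.apply_eq_smul
        simp only [g, LinearMap.coe_mk, AddHom.coe_mk] at this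
        rw [this, sub_self]
      exact hv₀.right (by simpa using hinj (a₁ := v₀) (a₂ := 0) (by simpa [this]))
    · exact h0
  intro v
  have := congrFun (congrArg (fun p => p.toFun) hh) v
  simpa [h, sub_eq_zero] using this



lemma density : ∀ (n : ℕ) (x : Fin n → V), LinearIndependent Ω x → ∀ y : Fin n → V,
    ∃ b : B, ∀ i, b • x i = y i := by
  intro n
  induction n with
  | zero => exact fun x _ y => ⟨0, fun i => i.elim0⟩
  | succ n IH =>
    intro x hx y
    set x' : Fin n → V := x ∘ Fin.castSucc with hx'def
    have hx' : LinearIndependent Ω x' := hx.comp _ (Fin.castSucc_injective n)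
    obtain ⟨b₀, hb₀⟩ := IH x' hx' (fun i => y i.castSucc)
    -- the left ideal annihilating x' (as B-submodule of B)
    let μ : B →ₗ[B] (Fin n → V) := LinearMap.pi (fun i => LinearMap.toSpanSingleton B V (x' i))
    let ν : B →ₗ[B] V := LinearMap.toSpanSingleton B V (x (Fin.last n))
    let W : Submodule B V := Submodule.map ν (LinearMap.ker μ)
    rcases eq_top_or_lt_top W with hW | hW
    · -- can adjust the last coordinate freely
      have : y (Fin.last n) - b₀ • x (Fin.last n) ∈ W := hW ▸ Submodule.mem_top
      obtain ⟨a, ha, hav⟩ := this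
      refine ⟨b₀ + a, fun i => ?_⟩
      induction i using Fin.lastCases with
      | last =>
        show (b₀ + a) • x (Fin.last n) = y (Fin.last n)
        have : ν a = y (Fin.last n) - b₀ • x (Fin.last n) := hav
        simp only [ν, LinearMap.toSpanSingleton_apply] at this
        rw [add_smul, this]; abel
      | cast j =>
        show (b₀ + a) • x j.castSucc = y j.castSucc
        have haj : a • x' j = 0 := by
          have := LinearMap.mem_ker.mp ha
          have := congrFun this j
          simpa [μ, LinearMap.pi_apply, LinearMap.toSpanSingleton_apply] using this
        have hxx : x j.castSucc = x' j := rfl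
        rw [add_smul, hxx, hb₀ j, haj, add_zero]
    · -- W is a proper submodule of simple V, hence ⊥
      exfalso
      have hWbot : W = ⊥ := (eq_bot_or_eq_top W).resolve_right hW.ne
      have hker : LinearMap.ker μ ≤ LinearMap.ker ν := by
        intro a ha
        have : ν a ∈ W := Submodule.mem_map_of_mem ha
        rw [hWbot] at this
        simpa using this
      -- extend to a map on all of (Fin n → V) using semisimplicity
      haveI : IsSemisimpleModule B (Fin n → V) := by
        refine isSemisimpleModule_of_isSemisimpleModule_submodule'
          (p := fun i => LinearMap.range (LinearMap.single B (fun _ : Fin n => V) i)) ?_ ?_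
        · intro i
          exact IsSemisimpleModule.range _
        · rw [eq_top_iff]
          intro v _
          have : v = ∑ i : Fin n, Pi.single i (v i) := by
            simp [Finset.univ_sum_single]
          rw [this]
          refine Submodule.sum_mem _ (fun i _ => Submodule.mem_iSup_of_mem i ?_)
          exact ⟨v i, rfl⟩
      obtain ⟨W', hW'⟩ := exists_isCompl (LinearMap.range μ)
      let f' : (B ⧸ LinearMap.ker μ) →ₗ[B] V := Submodule.liftQ _ ν hker
      let e : (B ⧸ LinearMap.ker μ) ≃ₗ[B] LinearMap.range μ := μ.quotKerEquivRange
      let g : (Fin n → V) →ₗ[B] V :=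
        (f'.comp e.symm.toLinearMap).comp
          ((Submodule.linearProjOfIsCompl _ _ hW'))
      have hgμ : ∀ b : B, g (μ b) = ν b := by
        intro b
        have h2 : e ((LinearMap.ker μ).mkQ b)
            = (Submodule.linearProjOfIsCompl _ _ hW') (μ b) := by
          apply Subtype.ext
          erw [Submodule.linearProjOfIsCompl_apply_left hW' ⟨μ b, LinearMap.mem_range_self μ b⟩]
          rfl
        show f' (e.symm ((Submodule.linearProjOfIsCompl _ _ hW') (μ b))) = ν b
        rw [← h2, LinearEquiv.symm_apply_apply]
        rfl
      -- each coordinate map of g is a scalar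
      have hscal : ∀ i : Fin n, ∃ c : Ω, ∀ v : V,
          g (Pi.single i v) = c • v := by
        intro i
        obtain ⟨c, hc⟩ := exists_scalar (Ω := Ω)
          (g.comp (LinearMap.single B (fun _ : Fin n => V) i))
        exact ⟨c, fun v => hc v⟩
      choose c hc using hscal
      -- x (last) is an Ω-combination of the x' i : contradiction with independence
      have hxl : x (Fin.last n) = ∑ i : Fin n, c i • x' i := by
        have h1 : x (Fin.last n) = ν 1 := by simp [ν]
        have h2 : μ 1 = fun i => x' i := by
          funext i; simp [μ]
        rw [h1, ← hgμ 1, h2]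
        have h3 : (fun i => x' i) = ∑ i : Fin n, Pi.single i (x' i) := by
          simp [Finset.univ_sum_single]
        rw [h3, map_sum]
        exact Finset.sum_congr rfl fun i _ => hc i (x' i)
      let coefs : Fin (n+1) → Ω := Fin.snoc c (-1 : Ω)
      have hcoef := Fintype.linearIndependent_iff.mp hx coefs
      have hzero : ∑ j : Fin (n+1), coefs j • x j = 0 := by
        rw [Fin.sum_univ_castSucc]
        simp only [coefs, Fin.snoc_castSucc, Fin.snoc_last]
        rw [hxl]
        simp [x', hx'def]
      have := hcoef hzero (Fin.last n)
      simp [coefs] at this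


end Density

lemma exists_trace_functional_of_simple (Ω B V : Type*) [Field Ω] [IsAlgClosed Ω] [Ring B]
    [Algebra Ω B] [AddCommGroup V] [Module B V] [Module Ω V] [IsScalarTower Ω B V]
    [IsSimpleModule B V] [FiniteDimensional Ω V] :
    ∃ φ : B →ₗ[Ω] Ω, (∃ b, φ b ≠ 0) ∧ ∀ u v : B, φ (u * v) = φ (v * u) := by
  let ρ : B →ₗ[Ω] (V →ₗ[Ω] V) :=
    { toFun := fun b => actEnd (Ω := Ω) b
      map_add' := fun b b' => by
        ext v
        rw [LinearMap.add_apply, actEnd_apply, actEnd_apply, actEnd_apply, add_smul]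
      map_smul' := fun ω b => by
        ext v
        rw [RingHom.id_apply, LinearMap.smul_apply, actEnd_apply, actEnd_apply, smul_assoc] }
  let φ : B →ₗ[Ω] Ω := (LinearMap.trace Ω V).comp ρ
  refine ⟨φ, ?_, ?_⟩
  · -- nonvanishing via density
    haveI : Nontrivial V := IsSimpleModule.nontrivial B V
    let bV := Module.finBasis Ω V
    have hn : 0 < Module.finrank Ω V := Module.finrank_pos
    let i0 : Fin (Module.finrank Ω V) := ⟨0, hn⟩
    obtain ⟨b, hb⟩ := density (B := B) (Module.finrank Ω V) bV bV.linearIndependent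
      (fun i => if i = i0 then bV i0 else 0)
    refine ⟨b, ?_⟩
    have htr : φ b = 1 := by
      show (LinearMap.trace Ω V) (ρ b) = 1
      rw [LinearMap.trace_eq_matrix_trace Ω bV]
      rw [Matrix.trace]
      have hdiag : ∀ i, (LinearMap.toMatrix bV bV (ρ b)) i i = if i = i0 then 1 else 0 := by
        intro i
        rw [LinearMap.toMatrix_apply]
        have h1 : (ρ b) (bV i) = if i = i0 then bV i0 else 0 := by
          show b • bV i = _
          rw [hb i]
        rw [h1]
        by_cases h : i = i0
        · subst h; simp
        · simp [h]
      have h2 : ∀ i, Matrix.diag (LinearMap.toMatrix bV bV (ρ b)) i = if i = i0 then 1 else 0 :=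
        hdiag
      rw [Finset.sum_congr rfl (fun i _ => h2 i)]
      simp
    rw [htr]; exact one_ne_zero
  · intro u v
    show (LinearMap.trace Ω V) (ρ (u * v)) = (LinearMap.trace Ω V) (ρ (v * u))
    have h1 : ρ (u * v) = ρ u * ρ v := by
      ext w; show (u * v) • w = u • v • w; rw [mul_smul]
    have h2 : ρ (v * u) = ρ v * ρ u := by
      ext w; show (v * u) • w = v • u • w; rw [mul_smul]
    rw [h1, h2, LinearMap.trace_mul_comm]

lemma exists_trace_functional_algClosed (Ω B : Type*) [Field Ω] [IsAlgClosed Ω] [Ring B]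
    [Nontrivial B] [Algebra Ω B] [FiniteDimensional Ω B] :
    ∃ φ : B →ₗ[Ω] Ω, (∃ b, φ b ≠ 0) ∧ ∀ u v : B, φ (u * v) = φ (v * u) := by
  obtain ⟨L, hL⟩ := Ideal.exists_maximal B
  haveI : IsSimpleModule B (B ⧸ L) := isSimpleModule_iff_isCoatom.mpr (Ideal.isMaximal_def.mp hL)
  haveI : FiniteDimensional Ω (B ⧸ L) :=
    Module.Finite.of_surjective ((L.mkQ).restrictScalars Ω) (Submodule.mkQ_surjective L)
  exact exists_trace_functional_of_simple Ω B (B ⧸ L)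

open TensorProduct in
lemma exists_trace_functional (F B : Type*) [Field F] [Ring B] [Nontrivial B]
    [Algebra F B] [FiniteDimensional F B] :
    ∃ ψ : B →ₗ[F] (AlgebraicClosure F), (∃ b, ψ b ≠ 0) ∧ ∀ u v : B, ψ (u * v) = ψ (v * u) := by
  set Ω := AlgebraicClosure F
  letI : Field Ω := inferInstance
  let E := Ω ⊗[F] B
  let bB := Module.finBasis F B
  let bE : Module.Basis (Fin (Module.finrank F B)) Ω E := Algebra.TensorProduct.basis Ω bB
  haveI : FiniteDimensional Ω E := Module.Finite.of_basis bE
  haveI : Nontrivial E := by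
    have hn : 0 < Module.finrank F B := Module.finrank_pos
    exact ⟨bE ⟨0, hn⟩, 0, bE.ne_zero _⟩
  obtain ⟨φ, ⟨e₀, he₀⟩, hcomm⟩ := exists_trace_functional_algClosed Ω E
  let ι : B →ₐ[F] E := Algebra.TensorProduct.includeRight
  let ψ : B →ₗ[F] Ω := (φ.restrictScalars F).comp ι.toLinearMap
  refine ⟨ψ, ?_, ?_⟩
  · by_contra h
    push_neg at h
    have hφ0 : φ = 0 := by
      have hspF : Submodule.span F {t : E | ∃ ω b, ω ⊗ₜ[F] b = t} = ⊤ :=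
        TensorProduct.span_tmul_eq_top F Ω B
      have hsp : Submodule.span Ω {t : E | ∃ ω b, ω ⊗ₜ[F] b = t} = ⊤ := by
        rw [eq_top_iff]
        intro t htriv
        clear htriv
        have ht : t ∈ Submodule.span F {t : E | ∃ ω b, ω ⊗ₜ[F] b = t} :=
          hspF ▸ Submodule.mem_top
        induction ht using Submodule.span_induction with
        | mem t hmem => exact Submodule.subset_span hmem
        | zero => exact Submodule.zero_mem _
        | add a b _ _ ha hb => exact Submodule.add_mem _ ha hb
        | smul c a _ ha =>
          rw [← IsScalarTower.algebraMap_smul Ω c a]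
          exact Submodule.smul_mem _ _ ha
      have : ∀ t : E, φ t = 0 := by
        intro t
        have ht : t ∈ Submodule.span Ω {t : E | ∃ ω b, ω ⊗ₜ[F] b = t} := hsp ▸ Submodule.mem_top
        induction ht using Submodule.span_induction with
        | mem t hmem =>
          obtain ⟨ω, b, rfl⟩ := hmem
          have h1 : (ω ⊗ₜ[F] b : E) = ω • ((1 : Ω) ⊗ₜ[F] b) := by
            rw [TensorProduct.smul_tmul', smul_eq_mul, mul_one]
          rw [h1, map_smul, smul_eq_mul]
          have := h b
          simp only [ψ, LinearMap.coe_comp, Function.comp_apply,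
            LinearMap.coe_restrictScalars, AlgHom.toLinearMap_apply] at this
          have h2 : φ ((1 : Ω) ⊗ₜ[F] b) = 0 := this
          rw [h2, mul_zero]
        | zero => simp
        | add a b _ _ ha hb => simp [ha, hb]
        | smul c a _ ha => simp [ha]
      exact LinearMap.ext fun t => this t
    rw [hφ0] at he₀
    simp at he₀
  · intro u v
    show φ (ι (u * v)) = φ (ι (v * u))
    rw [show ι (u * v) = ι u * ι v from map_mul ι u v,
      show ι (v * u) = ι v * ι u from map_mul ι v u, hcomm]

lemma exists_hyperplane (F A : Type*) [Field F] [Ring A] [Algebra F A] [FiniteDimensional F A]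
    (M : TwoSidedIdeal A) (hM : M ≠ ⊤) :
    ∃ N : Submodule F A, N ≠ ⊤ ∧ (∀ x ∈ M, x ∈ N) ∧ (∀ u v : A, u * v - v * u ∈ N) := by
  let B := M.ringCon.Quotient
  let π : A →+* B := RingCon.mk' M.ringCon
  letI : Algebra F B :=
    { algebraMap :=
        { toFun := fun c => π (algebraMap F A c)
          map_one' := by show π (algebraMap F A 1) = 1; rw [map_one, map_one]
          map_mul' := fun c d => by
            show π (algebraMap F A (c * d)) = π (algebraMap F A c) * π (algebraMap F A d)
            rw [map_mul, map_mul]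
          map_zero' := by show π (algebraMap F A 0) = 0; rw [map_zero, map_zero]
          map_add' := fun c d => by
            show π (algebraMap F A (c + d)) = π (algebraMap F A c) + π (algebraMap F A d)
            rw [map_add, map_add] }
      smul := fun c b => π (algebraMap F A c) * b
      commutes' := fun c b => by
        obtain ⟨a, rfl⟩ : ∃ a, π a = b := Quotient.mk''_surjective b
        show π (algebraMap F A c) * π a = π a * π (algebraMap F A c)
        rw [← map_mul, ← map_mul, Algebra.commutes]
      smul_def' := fun _ _ => rfl }
  have hπsurj : Function.Surjective π := Quotient.mk''_surjective
  have hπmem : ∀ x : A, π x = 0 ↔ x ∈ M := by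
    intro x
    constructor
    · intro h
      have : M.ringCon x 0 := Quotient.eq''.mp h
      exact (TwoSidedIdeal.mem_iff M x).mpr this
    · intro h
      exact Quotient.sound' ((TwoSidedIdeal.mem_iff M x).mp h)
  let πₗ : A →ₗ[F] B :=
    { toFun := π
      map_add' := map_add π
      map_smul' := fun c a => by
        simp only [RingHom.id_apply]
        rw [Algebra.smul_def, Algebra.smul_def, map_mul]
        rfl }
  haveI : Nontrivial B := by
    refine ⟨π 1, 0, fun h => hM ?_⟩
    have h1 : (1 : A) ∈ M := (hπmem 1).mp h
    refine SetLike.ext fun x => ⟨fun _ => trivial, fun _ => ?_⟩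
    simpa using M.mul_mem_left x 1 h1
  haveI : FiniteDimensional F B := Module.Finite.of_surjective πₗ hπsurj
  obtain ⟨ψ, ⟨b₀, hb₀⟩, hcomm⟩ := exists_trace_functional F B
  refine ⟨LinearMap.ker (ψ.comp πₗ), ?_, ?_, ?_⟩
  · intro htop
    obtain ⟨a₀, ha₀⟩ := hπsurj b₀
    have : ψ (πₗ a₀) = 0 := by
      have := htop ▸ Submodule.mem_top (x := a₀)
      exact this
    rw [show πₗ a₀ = b₀ from ha₀] at this
    exact hb₀ this
  · intro x hx
    have : π x = 0 := (hπmem x).mpr hx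
    simp only [LinearMap.mem_ker, LinearMap.coe_comp, Function.comp_apply]
    show ψ (π x) = 0
    rw [this, map_zero]
  · intro u v
    simp only [LinearMap.mem_ker, LinearMap.coe_comp, Function.comp_apply]
    show ψ (π (u * v - v * u)) = 0
    have hpi : π (u * v - v * u) = π u * π v - π v * π u := by
      rw [map_sub, map_mul, map_mul]
    rw [hpi, map_sub, hcomm, sub_self]

/-- If `x * y` lies in a proper subspace `N` containing the coatom `M` and all commutators,
for every `y`, then `x ∈ M`. -/
lemma mem_coatom_of_mul_mem (F A : Type*) [Field F] [Ring A] [Algebra F A]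
    (M : TwoSidedIdeal A) (hM : IsCoatom M)
    (N : Submodule F A) (hN : N ≠ ⊤) (hMN : ∀ z ∈ M, z ∈ N)
    (hNC : ∀ u v : A, u * v - v * u ∈ N)
    (x : A) (hx : ∀ y : A, x * y ∈ N) : x ∈ M := by
  by_contra hxM
  let MS : Submodule F A :=
    { carrier := M
      add_mem' := fun h1 h2 => M.add_mem h1 h2
      zero_mem' := M.zero_mem
      smul_mem' := fun c m hm => by
        rw [Algebra.smul_def]
        exact M.mul_mem_left _ _ hm }
  let sp : Submodule F A := Submodule.span F {z | ∃ a b : A, z = a * x * b}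
  let S : Submodule F A := MS ⊔ sp
  have hspL : ∀ (a : A), ∀ s ∈ sp, a * s ∈ sp := by
    intro a s hs
    induction hs using Submodule.span_induction with
    | mem z hz =>
      obtain ⟨p, q, rfl⟩ := hz
      exact Submodule.subset_span ⟨a * p, q, by rw [← mul_assoc, ← mul_assoc]⟩
    | zero => rw [mul_zero]; exact sp.zero_mem
    | add u v _ _ hu hv => rw [mul_add]; exact sp.add_mem hu hv
    | smul c u _ hu => rw [mul_smul_comm]; exact sp.smul_mem c hu
  have hspR : ∀ (a : A), ∀ s ∈ sp, s * a ∈ sp := by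
    intro a s hs
    induction hs using Submodule.span_induction with
    | mem z hz =>
      obtain ⟨p, q, rfl⟩ := hz
      exact Submodule.subset_span ⟨p, q * a, by rw [← mul_assoc]⟩
    | zero => rw [zero_mul]; exact sp.zero_mem
    | add u v _ _ hu hv => rw [add_mul]; exact sp.add_mem hu hv
    | smul c u _ hu => rw [smul_mul_assoc]; exact sp.smul_mem c hu
  have hSL : ∀ {a z : A}, z ∈ S → a * z ∈ S := by
    intro a z hz
    obtain ⟨m, hm, s, hs, rfl⟩ := Submodule.mem_sup.mp hz
    rw [mul_add]
    exact Submodule.mem_sup.mpr ⟨a * m, M.mul_mem_left a m hm, a * s, hspL a s hs, rfl⟩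
  have hSR : ∀ {z a : A}, z ∈ S → z * a ∈ S := by
    intro z a hz
    obtain ⟨m, hm, s, hs, rfl⟩ := Submodule.mem_sup.mp hz
    rw [add_mul]
    exact Submodule.mem_sup.mpr ⟨m * a, M.mul_mem_right m a hm, s * a, hspR a s hs, rfl⟩
  let K : TwoSidedIdeal A := TwoSidedIdeal.mk' S S.zero_mem
    (fun h1 h2 => S.add_mem h1 h2) (fun h => S.neg_mem h)
    (fun hy => hSL hy) (fun hy => hSR hy)
  have hmemK : ∀ z : A, z ∈ K ↔ z ∈ S := fun z =>
    TwoSidedIdeal.mem_mk' _ _ _ _ _ _ z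
  have hMK : M < K := by
    constructor
    · intro z hz
      exact (hmemK z).mpr (Submodule.mem_sup_left hz)
    · intro hKM
      exact hxM (hKM ((hmemK x).mpr (Submodule.mem_sup_right
        (Submodule.subset_span ⟨1, 1, by rw [one_mul, mul_one]⟩))))
  have hKtop : K = ⊤ := hM.2 K hMK
  have hSN : S ≤ N := by
    refine sup_le ?_ ?_
    · intro z hz; exact hMN z hz
    · rw [Submodule.span_le]
      rintro z ⟨a, b, rfl⟩
      have hid : a * x * b = x * (b * a) + (a * (x * b) - (x * b) * a) := by
        noncomm_ring
      rw [hid]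
      exact N.add_mem (hx (b * a)) (hNC a (x * b))
  apply hN
  rw [eq_top_iff]
  intro z _
  exact hSN ((hmemK z).mp (by rw [hKtop]; trivial))


/-- The radical of a finite-dimensional algebra, realized as the intersection of all
maximal two-sided ideals. -/
noncomputable def ringRad (A : Type*) [Ring A] : TwoSidedIdeal A :=
  sInf {M : TwoSidedIdeal A | IsCoatom M}

/-- **Lemma 3.2 (second part).** Let `A` be a finite-dimensional algebra over a field `F`
with `char F ≠ 2, 3`, and let `T : A → A` be a linear map satisfying
`T x ^ 3 - x ^ 3 ∈ [A,A]` for every `x`. If `ker T ∩ rad A = {0}`, then `T` is bijective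
and leaves every maximal two-sided ideal of `A` invariant; in particular
`T (rad A) ⊆ rad A`. -/
theorem bijective_and_maximal_ideals_invariant (F A : Type*) [Field F] [Ring A]
    [Algebra F A] [FiniteDimensional F A] (h2 : (2 : F) ≠ 0) (h3 : (3 : F) ≠ 0)
    (T : A →ₗ[F] A)
    (hT : ∀ x : A, T x ^ 3 - x ^ 3 ∈
      Submodule.span F {z : A | ∃ u v : A, z = u * v - v * u})
    (hker : ∀ x : A, T x = 0 → x ∈ ringRad A → x = 0) :
    Function.Bijective T ∧
      (∀ M : TwoSidedIdeal A, IsCoatom M → ∀ x ∈ M, T x ∈ M) ∧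
      (∀ x ∈ ringRad A, T x ∈ ringRad A) := by
  set C : Submodule F A := Submodule.span F {z : A | ∃ u v : A, z = u * v - v * u} with hCdef
  have hcomm_mem : ∀ u v : A, u * v - v * u ∈ C := fun u v =>
    Submodule.subset_span ⟨u, v, rfl⟩
  -- a helper for dividing by 2 inside a submodule
  have hhalf : ∀ (N : Submodule F A) (w : A), w + w ∈ N → w ∈ N := by
    intro N w hw
    have h1 : (2 : F) • w ∈ N := by rw [two_smul]; exact hw
    have h2' := N.smul_mem ((2 : F)⁻¹) h1
    rwa [smul_smul, inv_mul_cancel₀ h2, one_smul] at h2'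
  -- the key linearized identity
  have hident : ∀ x y z : A,
      (T x * T y * T z + T x * T z * T y) - (x * y * z + x * z * y) ∈ C := by
    intro x y z
    have hGid : ∀ a b c : A,
        ((a+b+c)^3 - (a+b)^3 - (b+c)^3 - (a+c)^3 + a^3 + b^3 + c^3)
          - ((a*b*c + a*b*c + a*b*c) + (a*c*b + a*c*b + a*c*b))
        = ((b*c)*a - a*(b*c)) + (c*(a*b) - (a*b)*c) + (b*(a*c) - (a*c)*b)
          + ((c*b)*a - a*(c*b)) := by
      intro a b c
      noncomm_ring
    have hGmem : ∀ a b c : A,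
        ((a+b+c)^3 - (a+b)^3 - (b+c)^3 - (a+c)^3 + a^3 + b^3 + c^3)
          - ((a*b*c + a*b*c + a*b*c) + (a*c*b + a*c*b + a*c*b)) ∈ C := by
      intro a b c
      rw [hGid a b c]
      exact C.add_mem (C.add_mem (C.add_mem (hcomm_mem (b*c) a) (hcomm_mem c (a*b)))
        (hcomm_mem b (a*c))) (hcomm_mem (c*b) a)
    have hgT : ((T x + T y + T z)^3 - (T x + T y)^3 - (T y + T z)^3 - (T x + T z)^3
          + (T x)^3 + (T y)^3 + (T z)^3)
        - ((x+y+z)^3 - (x+y)^3 - (y+z)^3 - (x+z)^3 + x^3 + y^3 + z^3) ∈ C := by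
      have e : ((T x + T y + T z)^3 - (T x + T y)^3 - (T y + T z)^3 - (T x + T z)^3
            + (T x)^3 + (T y)^3 + (T z)^3)
          - ((x+y+z)^3 - (x+y)^3 - (y+z)^3 - (x+z)^3 + x^3 + y^3 + z^3)
          = ((T (x+y+z))^3 - (x+y+z)^3) - ((T (x+y))^3 - (x+y)^3)
            - ((T (y+z))^3 - (y+z)^3) - ((T (x+z))^3 - (x+z)^3)
            + ((T x)^3 - x^3) + ((T y)^3 - y^3) + ((T z)^3 - z^3) := by
        simp only [map_add]
        abel
      rw [e]
      exact C.add_mem (C.add_mem (C.add_mem (C.sub_mem (C.sub_mem (C.sub_mem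
        (hT (x+y+z)) (hT (x+y))) (hT (y+z))) (hT (x+z))) (hT x)) (hT y)) (hT z)
    -- combine
    set u : A := (T x * T y * T z + T x * T z * T y) - (x * y * z + x * z * y) with hu
    have h3u : u + u + u ∈ C := by
      have hcomb :
          u + u + u
          = (((T x + T y + T z)^3 - (T x + T y)^3 - (T y + T z)^3 - (T x + T z)^3
              + (T x)^3 + (T y)^3 + (T z)^3)
            - ((x+y+z)^3 - (x+y)^3 - (y+z)^3 - (x+z)^3 + x^3 + y^3 + z^3))
          - (((T x + T y + T z)^3 - (T x + T y)^3 - (T y + T z)^3 - (T x + T z)^3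
              + (T x)^3 + (T y)^3 + (T z)^3)
            - ((T x * T y * T z + T x * T y * T z + T x * T y * T z)
              + (T x * T z * T y + T x * T z * T y + T x * T z * T y)))
          + (((x+y+z)^3 - (x+y)^3 - (y+z)^3 - (x+z)^3 + x^3 + y^3 + z^3)
            - ((x*y*z + x*y*z + x*y*z) + (x*z*y + x*z*y + x*z*y))) := by
        rw [hu]; abel
      rw [hcomb]
      exact C.add_mem (C.sub_mem hgT (hGmem (T x) (T y) (T z))) (hGmem x y z)
    have h3u' : (3 : F) • u ∈ C := by
      have h33 : (3 : F) • u = u + u + u := by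
        have hn : (3 : F) = ((3 : ℕ) : F) := by norm_num
        rw [hn, Nat.cast_smul_eq_nsmul]
        show (3 : ℕ) • u = u + u + u
        rw [show (3 : ℕ) = 2 + 1 from rfl, add_nsmul, one_nsmul, two_nsmul]
      rw [h33]; exact h3u
    have := C.smul_mem ((3 : F)⁻¹) h3u'
    rwa [smul_smul, inv_mul_cancel₀ h3, one_smul] at this
  -- injectivity
  have hinj : Function.Injective T := by
    rw [injective_iff_map_eq_zero]
    intro x hx
    have hxM : ∀ M : TwoSidedIdeal A, IsCoatom M → x ∈ M := by
      intro M hM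
      obtain ⟨N, hN, hMN, hNC⟩ := exists_hyperplane F A M hM.1
      have hCN : C ≤ N := by
        rw [hCdef, Submodule.span_le]
        rintro z ⟨a, b, rfl⟩
        exact hNC a b
      refine mem_coatom_of_mul_mem F A M hM N hN hMN hNC x ?_
      intro y
      have h := hident x y 1
      rw [hx] at h
      have he : (0 * T y * T 1 + 0 * T 1 * T y) - (x * y * 1 + x * 1 * y)
          = -(x * y + x * y) := by noncomm_ring
      rw [he] at h
      have h' := N.neg_mem (hCN h)
      rw [neg_neg] at h'
      exact hhalf N (x * y) h'
    have hxrad : x ∈ ringRad A :=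
      (TwoSidedIdeal.mem_sInf A).mpr (fun I hI => hxM I hI)
    exact hker x hx hxrad
  have hsurj : Function.Surjective T := (LinearMap.injective_iff_surjective).mp hinj
  have hinv : ∀ M : TwoSidedIdeal A, IsCoatom M → ∀ x ∈ M, T x ∈ M := by
    intro M hM x hx
    obtain ⟨N, hN, hMN, hNC⟩ := exists_hyperplane F A M hM.1
    have hCN : C ≤ N := by
      rw [hCdef, Submodule.span_le]
      rintro z ⟨a, b, rfl⟩
      exact hNC a b
    refine mem_coatom_of_mul_mem F A M hM N hN hMN hNC (T x) ?_
    intro a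
    obtain ⟨y, rfl⟩ := hsurj a
    obtain ⟨z, hz⟩ := hsurj 1
    have h := hident x y z
    rw [hz] at h
    have he : (T x * T y * 1 + T x * 1 * T y) - (x * y * z + x * z * y)
        = (T x * T y + T x * T y) - (x * y * z + x * z * y) := by noncomm_ring
    rw [he] at h
    have hM1 : x * y * z + x * z * y ∈ N :=
      N.add_mem (hMN _ (M.mul_mem_right (x * y) z (M.mul_mem_right x y hx)))
        (hMN _ (M.mul_mem_right (x * z) y (M.mul_mem_right x z hx)))
    have h' : T x * T y + T x * T y ∈ N := by
      have := N.add_mem (hCN h) hM1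
      rwa [sub_add_cancel] at this
    exact hhalf N (T x * T y) h'
  refine ⟨⟨hinj, hsurj⟩, hinv, ?_⟩
  intro x hx
  rw [ringRad] at hx ⊢
  exact (TwoSidedIdeal.mem_sInf A).mpr
    (fun I hI => hinv I hI x ((TwoSidedIdeal.mem_sInf A).mp hx I hI))
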